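/- Let 1→2→⋯→m→1 be an m-vertex directed cycle (m ≥ 2) where each arc carries a real matrix C_i with n columns and full row rank, and let P_i = C_iᵀ(C_iC_iᵀ)^{−1}C_i be the orthogonal projection onto (kernel C_i)^⊥. If the agents update x_i(t+1) = x_i(t) − (1/2) P_i (x_i(t) − x_{i−1}(t)) for i ∈ {1,…,m} (indices mod m) with initial states satisfying x_i(0) ∈ image(P_i) for every i, then all m agents reach a consensus exponentially fast: there exist z ∈ ℝ^n, c ≥ 0 and ρ ∈ [0,1) such that ‖x_i(t) − z‖ ≤ c ρᵗ for all i and t. -/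

import Mathlib

open Matrix

set_option synthInstance.maxHeartbeats 1000000
set_option maxHeartbeats 2000000

open Matrix

-- full row rank => C*Cᵀ invertible
lemma isUnit_CCt {k n : ℕ} (C : Matrix (Fin k) (Fin n) ℝ) (h : C.rank = k) :
    IsUnit (C * Cᵀ).det := by
  have hr : (C * Cᵀ).rank = k := by rw [Matrix.rank_self_mul_transpose, h]
  have hsurj : Function.Surjective (C * Cᵀ).mulVecLin := by
    rw [← LinearMap.range_eq_top]
    apply Submodule.eq_top_of_finrank_eq
    rw [← Matrix.rank]  -- rank = finrank range mulVecLin?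
    simp [hr]
  exact (Matrix.isUnit_iff_isUnit_det _).mp (Matrix.mulVec_surjective_iff_isUnit.mp hsurj)

lemma proj_symm {k n : ℕ} (C : Matrix (Fin k) (Fin n) ℝ) (h : C.rank = k) :
    (Cᵀ * (C * Cᵀ)⁻¹ * C)ᵀ = Cᵀ * (C * Cᵀ)⁻¹ * C := by
  have h1 : (C * Cᵀ)ᵀ = C * Cᵀ := by rw [Matrix.transpose_mul, Matrix.transpose_transpose]
  rw [Matrix.transpose_mul, Matrix.transpose_mul, Matrix.transpose_transpose,
    Matrix.transpose_nonsing_inv, h1, Matrix.mul_assoc]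

lemma proj_idem {k n : ℕ} (C : Matrix (Fin k) (Fin n) ℝ) (h : C.rank = k) :
    (Cᵀ * (C * Cᵀ)⁻¹ * C) * (Cᵀ * (C * Cᵀ)⁻¹ * C) = Cᵀ * (C * Cᵀ)⁻¹ * C := by
  have hu := isUnit_CCt C h
  calc (Cᵀ * (C * Cᵀ)⁻¹ * C) * (Cᵀ * (C * Cᵀ)⁻¹ * C)
      = Cᵀ * (C * Cᵀ)⁻¹ * ((C * Cᵀ) * (C * Cᵀ)⁻¹) * C := by
        simp only [Matrix.mul_assoc]
    _ = Cᵀ * (C * Cᵀ)⁻¹ * C := by rw [Matrix.mul_nonsing_inv _ hu, Matrix.mul_one]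
open Matrix

noncomputable def toE {n : ℕ} (v : Fin n → ℝ) : EuclideanSpace ℝ (Fin n) :=
  (WithLp.equiv 2 _).symm v

variable {n : ℕ}

@[simp] lemma toE_sub (a b : Fin n → ℝ) : toE (a - b) = toE a - toE b := rfl
@[simp] lemma toE_apply (a : Fin n → ℝ) (i : Fin n) : toE a i = a i := rfl

lemma inner_toE (v w : Fin n → ℝ) : (inner ℝ (toE v) (toE w) : ℝ) = v ⬝ᵥ w := by
  simp [toE, PiLp.inner_apply, RCLike.inner_apply, dotProduct, mul_comm]

lemma norm_toE_sq (v : Fin n → ℝ) : ‖toE v‖ ^ 2 = v ⬝ᵥ v := by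
  rw [← inner_toE]; exact (real_inner_self_eq_norm_sq _).symm

section proj
variable (P : Matrix (Fin n) (Fin n) ℝ) (hs : Pᵀ = P) (hi : P * P = P)

include hs hi in
lemma proj_pyth (v : Fin n → ℝ) :
    ‖toE v‖ ^ 2 = ‖toE (P *ᵥ v)‖ ^ 2 + ‖toE (v - P *ᵥ v)‖ ^ 2 := by
  have hvm : ∀ x : Fin n → ℝ, x ᵥ* P = P *ᵥ x := by
    intro x; nth_rewrite 1 [← hs]; exact Matrix.vecMul_transpose P x
  have horth : (inner ℝ (toE (P *ᵥ v)) (toE (v - P *ᵥ v)) : ℝ) = 0 := by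
    rw [inner_toE, dotProduct_sub]
    have h2 : (P *ᵥ v) ⬝ᵥ (P *ᵥ v) = (P *ᵥ v) ⬝ᵥ v := by
      rw [Matrix.dotProduct_mulVec, hvm, Matrix.mulVec_mulVec, hi]
    rw [h2, sub_self]
  have hv : toE v = toE (P *ᵥ v) + toE (v - P *ᵥ v) := by
    have : toE v - toE (P *ᵥ v) = toE (v - P *ᵥ v) := (toE_sub _ _).symm
    rw [← this]; abel
  rw [hv, norm_add_sq_real, horth]
  ring

include hs hi in
lemma proj_norm_le (v : Fin n → ℝ) : ‖toE (P *ᵥ v)‖ ≤ ‖toE v‖ := by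
  have := proj_pyth P hs hi v
  nlinarith [sq_nonneg ‖toE (v - P *ᵥ v)‖, norm_nonneg (toE (P *ᵥ v)), norm_nonneg (toE v),
    sq_nonneg (‖toE (P *ᵥ v)‖ - ‖toE v‖), sq_nonneg (‖toE (P *ᵥ v)‖ + ‖toE v‖)]

include hs hi in
lemma proj_norm_eq (v : Fin n → ℝ) (h : ‖toE (P *ᵥ v)‖ = ‖toE v‖) : P *ᵥ v = v := by
  have := proj_pyth P hs hi v
  rw [h] at this
  have h0 : ‖toE (v - P *ᵥ v)‖ ^ 2 = 0 := by linarith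
  have h1 : toE (v - P *ᵥ v) = 0 := by
    have := pow_eq_zero_iff (n := 2) (by norm_num) |>.mp h0
    simpa using this
  have : v - P *ᵥ v = 0 := congrArg (WithLp.equiv 2 (Fin n → ℝ)) h1
  have := sub_eq_zero.mp this
  exact this.symm

end proj
open Module
set_option synthInstance.maxHeartbeats 1000000
set_option maxHeartbeats 2000000

lemma le_of_sq_le_sq' {a b : ℝ} (hb : 0 ≤ b) (h : a ^ 2 ≤ b ^ 2) : a ≤ b := by
  nlinarith

section abstract
variable {E : Type*} [NormedAddCommGroup E] [NormedSpace ℝ E] [FiniteDimensional ℝ E]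
variable (T : E →ₗ[ℝ] E)

omit [FiniteDimensional ℝ E]

lemma Lap (x : E) : (LinearMap.id - T : E →ₗ[ℝ] E) x = x - T x := rfl

lemma Tpow_succ_apply (t : ℕ) (x : E) : (T ^ (t+1)) x = T ((T ^ t) x) := by
  rw [pow_succ', Module.End.mul_apply]

lemma Tpow_succ_apply' (t : ℕ) (x : E) : (T ^ (t+1)) x = (T ^ t) (T x) := by
  rw [pow_succ, Module.End.mul_apply]

lemma Tpow_comm (t : ℕ) (x : E) : (T ^ t) (T x) = T ((T ^ t) x) := by
  rw [← Module.End.mul_apply, ← pow_succ, pow_succ', Module.End.mul_apply]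

lemma Tpow_L_comm (t : ℕ) (x : E) :
    (T ^ t) ((LinearMap.id - T : E →ₗ[ℝ] E) x)
      = (LinearMap.id - T : E →ₗ[ℝ] E) ((T ^ t) x) := by
  simp only [LinearMap.sub_apply, LinearMap.id_apply, map_sub]
  rw [Tpow_comm]

section firm
variable (hfirm : ∀ x : E, ‖T x‖ ^ 2 + ‖x - T x‖ ^ 2 ≤ ‖x‖ ^ 2)
include hfirm

lemma T_norm_le (x : E) : ‖T x‖ ≤ ‖x‖ := by
  refine le_of_sq_le_sq' (norm_nonneg _) ?_
  nlinarith [hfirm x, sq_nonneg ‖x - T x‖]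

lemma Tpow_norm_le (t : ℕ) (x : E) : ‖(T ^ t) x‖ ≤ ‖x‖ := by
  induction t with
  | zero => simp
  | succ t ih =>
    rw [Tpow_succ_apply]
    exact le_trans (T_norm_le T hfirm _) ih

-- partial sums of ‖L (Tᵗ w)‖² are bounded
lemma sum_L_sq_le (w : E) (s : ℕ) :
    ‖(T ^ s) w‖ ^ 2 + ∑ j ∈ Finset.range s,
      ‖(LinearMap.id - T : E →ₗ[ℝ] E) ((T ^ j) w)‖ ^ 2 ≤ ‖w‖ ^ 2 := by
  induction s with
  | zero => simp
  | succ s ih =>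
    rw [Finset.sum_range_succ, Tpow_succ_apply]
    have := hfirm ((T ^ s) w)
    rw [← Lap] at this
    linarith

lemma L_Tpow_decay (w : E) (t : ℕ) :
    ((t : ℝ) + 1) * ‖(LinearMap.id - T : E →ₗ[ℝ] E) ((T ^ t) w)‖ ^ 2 ≤ ‖w‖ ^ 2 := by
  have hanti : ∀ j, ∀ i ≤ j, ‖(LinearMap.id - T : E →ₗ[ℝ] E) ((T ^ j) w)‖ ^ 2
      ≤ ‖(LinearMap.id - T : E →ₗ[ℝ] E) ((T ^ i) w)‖ ^ 2 := by
    intro j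
    induction j with
    | zero => intro i hi; interval_cases i; exact le_refl _
    | succ j ih =>
      intro i hi
      have hstep : ‖(LinearMap.id - T : E →ₗ[ℝ] E) ((T ^ (j+1)) w)‖ ^ 2
          ≤ ‖(LinearMap.id - T : E →ₗ[ℝ] E) ((T ^ j) w)‖ ^ 2 := by
        have hrw : (LinearMap.id - T : E →ₗ[ℝ] E) ((T ^ (j+1)) w)
            = T ((LinearMap.id - T : E →ₗ[ℝ] E) ((T ^ j) w)) := by
          rw [Tpow_succ_apply]
          simp only [Lap, map_sub]
        rw [hrw]
        have h1 := T_norm_le T hfirm ((LinearMap.id - T : E →ₗ[ℝ] E) ((T ^ j) w))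
        have h0 := norm_nonneg ((LinearMap.id - T : E →ₗ[ℝ] E) ((T ^ j) w))
        have h2 := norm_nonneg (T ((LinearMap.id - T : E →ₗ[ℝ] E) ((T ^ j) w)))
        nlinarith
      rcases Nat.lt_succ_iff_lt_or_eq.mp (Nat.lt_succ_of_le hi) with h | h
      · exact le_trans hstep (ih i (Nat.lt_succ_iff.mp h))
      · subst h; exact le_refl _
  have hsum := sum_L_sq_le T hfirm w (t + 1)
  have hlow : ((t : ℝ) + 1) * ‖(LinearMap.id - T : E →ₗ[ℝ] E) ((T ^ t) w)‖ ^ 2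
      ≤ ∑ j ∈ Finset.range (t+1), ‖(LinearMap.id - T : E →ₗ[ℝ] E) ((T ^ j) w)‖ ^ 2 := by
    have : ∀ j ∈ Finset.range (t+1), ‖(LinearMap.id - T : E →ₗ[ℝ] E) ((T ^ t) w)‖ ^ 2
        ≤ ‖(LinearMap.id - T : E →ₗ[ℝ] E) ((T ^ j) w)‖ ^ 2 := by
      intro j hj
      exact hanti t j (Nat.lt_succ_iff.mp (Finset.mem_range.mp hj))
    calc ((t : ℝ) + 1) * ‖(LinearMap.id - T : E →ₗ[ℝ] E) ((T ^ t) w)‖ ^ 2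
        = ∑ _j ∈ Finset.range (t+1), ‖(LinearMap.id - T : E →ₗ[ℝ] E) ((T ^ t) w)‖ ^ 2 := by
          rw [Finset.sum_const, Finset.card_range]; push_cast; ring
      _ ≤ _ := Finset.sum_le_sum this
  nlinarith [sq_nonneg ‖(T ^ (t+1)) w‖]

end firm
end abstract
section abstract2
variable {E : Type*} [NormedAddCommGroup E] [NormedSpace ℝ E] [FiniteDimensional ℝ E]
variable (T : E →ₗ[ℝ] E)

lemma range_inv (v : E) (hv : v ∈ LinearMap.range (LinearMap.id - T : E →ₗ[ℝ] E)) :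
    T v ∈ LinearMap.range (LinearMap.id - T : E →ₗ[ℝ] E) := by
  obtain ⟨a, ha⟩ := hv
  exact ⟨T a, by rw [← ha, Lap, Lap, map_sub]⟩

lemma Tpow_range_inv (s : ℕ) (v : E) (hv : v ∈ LinearMap.range (LinearMap.id - T : E →ₗ[ℝ] E)) :
    (T ^ s) v ∈ LinearMap.range (LinearMap.id - T : E →ₗ[ℝ] E) := by
  induction s with
  | zero => simpa using hv
  | succ s ih => rw [Tpow_succ_apply]; exact range_inv T _ ih

lemma Tpow_fix (f : E) (hf : T f = f) (t : ℕ) : (T ^ t) f = f := by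
  induction t with
  | zero => rfl
  | succ t ih => rw [Tpow_succ_apply, ih, hf]

section firm2
variable (hfirm : ∀ x : E, ‖T x‖ ^ 2 + ‖x - T x‖ ^ 2 ≤ ‖x‖ ^ 2)
include hfirm

lemma ker_range_disjoint :
    Disjoint (LinearMap.ker (LinearMap.id - T : E →ₗ[ℝ] E))
      (LinearMap.range (LinearMap.id - T : E →ₗ[ℝ] E)) := by
  rw [Submodule.disjoint_def]
  intro f hker hran
  obtain ⟨w, hw⟩ := hran
  have hTf : T f = f := by
    have h0 := LinearMap.mem_ker.mp hker
    rw [Lap] at h0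
    exact (sub_eq_zero.mp h0).symm
  have key : ∀ t : ℕ, w - (T ^ t) w = (t : ℝ) • f := by
    intro t
    induction t with
    | zero => simp
    | succ t ih =>
      have h1 : w - (T ^ (t+1)) w = (w - (T ^ t) w) + (T ^ t) ((LinearMap.id - T : E →ₗ[ℝ] E) w) := by
        rw [Tpow_L_comm, Lap, Tpow_succ_apply]
        abel
      rw [h1, hw, ih, Tpow_fix T f hTf]
      push_cast
      rw [add_smul, one_smul]
  by_contra hf0
  have hfne : ‖f‖ > 0 := by
    rcases (norm_pos_iff (a := f)).mpr hf0 with h; exact h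
  obtain ⟨t, ht⟩ := exists_nat_gt ((2 * ‖w‖) / ‖f‖)
  have h2 : ‖w - (T ^ t) w‖ ≤ 2 * ‖w‖ := by
    calc ‖w - (T ^ t) w‖ ≤ ‖w‖ + ‖(T ^ t) w‖ := norm_sub_le _ _
      _ ≤ ‖w‖ + ‖w‖ := by linarith [Tpow_norm_le T hfirm t w]
      _ = 2 * ‖w‖ := by ring
  rw [key t, norm_smul, Real.norm_natCast] at h2
  rw [div_lt_iff₀ hfne] at ht
  linarith

lemma ker_sup_range_eq_top :
    (LinearMap.ker (LinearMap.id - T : E →ₗ[ℝ] E))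
      ⊔ (LinearMap.range (LinearMap.id - T : E →ₗ[ℝ] E)) = ⊤ := by
  have h2 : (LinearMap.ker (LinearMap.id - T : E →ₗ[ℝ] E))
      ⊓ (LinearMap.range (LinearMap.id - T : E →ₗ[ℝ] E)) = ⊥ :=
    disjoint_iff.mp (ker_range_disjoint T hfirm)
  have h1 := Submodule.finrank_sup_add_finrank_inf_eq
    (LinearMap.ker (LinearMap.id - T : E →ₗ[ℝ] E))
    (LinearMap.range (LinearMap.id - T : E →ₗ[ℝ] E))
  rw [h2] at h1
  simp only [finrank_bot, add_zero] at h1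
  have h3 := LinearMap.finrank_range_add_finrank_ker (LinearMap.id - T : E →ₗ[ℝ] E)
  exact Submodule.eq_top_of_finrank_eq (by omega)

lemma exists_t0 :
    ∃ t₀ : ℕ, 1 ≤ t₀ ∧ ∀ u ∈ LinearMap.range (LinearMap.id - T : E →ₗ[ℝ] E),
      ‖(T ^ t₀) u‖ ≤ 2⁻¹ * ‖u‖ := by
  classical
  set R := LinearMap.range (LinearMap.id - T : E →ₗ[ℝ] E) with hR
  set d := Module.finrank ℝ R with hd
  set b : Basis (Fin d) ℝ R := Module.finBasis ℝ R with hb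
  have hmem : ∀ j : Fin d, (b j : E) ∈ R := fun j => (b j).2
  choose w hw using fun j => hmem j
  set K : Fin d → ℝ := fun j => ‖LinearMap.toContinuousLinearMap (b.coord j)‖ with hK
  have hK0 : ∀ j, 0 ≤ K j := by
    intro j
    simp only [hK]
    exact norm_nonneg (LinearMap.toContinuousLinearMap (b.coord j))
  set W := ∑ j, K j * ‖w j‖ with hW
  have hW0 : 0 ≤ W := Finset.sum_nonneg fun j _ => mul_nonneg (hK0 j) (norm_nonneg _)
  refine ⟨⌈(2*W)^2⌉₊ + 1, le_add_self, ?_⟩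
  set t₀ := ⌈(2*W)^2⌉₊ + 1 with ht₀
  set s := Real.sqrt ((t₀ : ℝ) + 1) with hs
  have hspos : 0 < s := Real.sqrt_pos.mpr (by positivity)
  have h2Ws : 2 * W ≤ s := by
    have h1 : (2*W)^2 ≤ ((t₀ : ℝ) + 1) := by
      have := Nat.le_ceil ((2*W)^2)
      have h2 : ((⌈(2*W)^2⌉₊ : ℝ)) ≤ (t₀ : ℝ) := by
        rw [ht₀]; push_cast; linarith
      linarith
    calc 2*W = Real.sqrt ((2*W)^2) := by rw [Real.sqrt_sq (by linarith)]
      _ ≤ s := Real.sqrt_le_sqrt h1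
  -- basis vector decay
  have hbj : ∀ j, ‖(T ^ t₀) (b j : E)‖ ≤ ‖w j‖ / s := by
    intro j
    have hdecay := L_Tpow_decay T hfirm (w j) t₀
    have heq : (T ^ t₀) (b j : E) = (LinearMap.id - T : E →ₗ[ℝ] E) ((T ^ t₀) (w j)) := by
      rw [← hw j, Tpow_L_comm]
    rw [heq]
    refine le_of_sq_le_sq' (by positivity) ?_
    rw [div_pow, hs, Real.sq_sqrt (by positivity)]
    rw [le_div_iff₀ (by positivity)]
    nlinarith [hdecay]
  intro u hu
  set uu : R := ⟨u, hu⟩ with huu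
  have hrep : u = ∑ j, b.repr uu j • (b j : E) := by
    have h1 := b.sum_repr uu
    have h2 := congrArg (Submodule.subtype R) h1
    simp only [map_sum, _root_.map_smul, Submodule.coe_subtype] at h2
    exact h2.symm
  have hcoord : ∀ j, |b.repr uu j| ≤ K j * ‖u‖ := by
    intro j
    have h1 := (LinearMap.toContinuousLinearMap (b.coord j)).le_opNorm uu
    simp only [LinearMap.coe_toContinuousLinearMap'] at h1
    have h2 : ‖uu‖ = ‖u‖ := rfl
    rw [h2] at h1
    simpa [Basis.coord_apply, Real.norm_eq_abs] using h1
  calc ‖(T ^ t₀) u‖ = ‖∑ j, b.repr uu j • (T ^ t₀) (b j : E)‖ := by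
        rw [hrep]; rw [map_sum]; simp only [_root_.map_smul]
    _ ≤ ∑ j, ‖b.repr uu j • (T ^ t₀) (b j : E)‖ := norm_sum_le _ _
    _ ≤ ∑ j, (K j * ‖w j‖) * (‖u‖ / s) := by
        refine Finset.sum_le_sum fun j _ => ?_
        rw [norm_smul, Real.norm_eq_abs]
        calc |b.repr uu j| * ‖(T ^ t₀) (b j : E)‖
            ≤ (K j * ‖u‖) * (‖w j‖ / s) :=
              mul_le_mul (hcoord j) (hbj j) (norm_nonneg _) (mul_nonneg (hK0 j) (norm_nonneg u))
          _ = (K j * ‖w j‖) * (‖u‖ / s) := by ring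
    _ = W * (‖u‖ / s) := by rw [← Finset.sum_mul]
    _ ≤ (s / 2) * (‖u‖ / s) := by
        refine mul_le_mul_of_nonneg_right (by linarith) (by positivity)
    _ = 2⁻¹ * ‖u‖ := by field_simp

end firm2
end abstract2
lemma geom_bound (t₀ : ℕ) (ht₀ : 1 ≤ t₀) (t q r : ℕ) (h : r + t₀ * q = t) (hr : r < t₀) :
    ((2:ℝ)⁻¹) ^ q ≤ 2 * ((2:ℝ) ^ (-(t₀:ℝ)⁻¹)) ^ t := by
  have h2 : (1:ℝ) < 2 := one_lt_two
  have ht₀pos : (0:ℝ) < (t₀ : ℝ) := by exact_mod_cast ht₀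
  have hL : ((2:ℝ)⁻¹) ^ q = (2:ℝ) ^ (-(q:ℝ)) := by
    rw [Real.rpow_neg (by norm_num), Real.rpow_natCast, inv_pow]
  have hR : ((2:ℝ) ^ (-(t₀:ℝ)⁻¹)) ^ t = (2:ℝ) ^ (-(t₀:ℝ)⁻¹ * (t:ℝ)) := by
    rw [← Real.rpow_natCast ((2:ℝ) ^ (-(t₀:ℝ)⁻¹)) t, ← Real.rpow_mul (by norm_num)]
  have h21 : (2:ℝ) = (2:ℝ) ^ (1:ℝ) := by rw [Real.rpow_one]
  rw [hL, hR]
  nth_rewrite 2 [h21]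
  rw [← Real.rpow_add (by norm_num)]
  rw [Real.rpow_le_rpow_left_iff h2]
  have hineq : (t : ℝ) ≤ (t₀ : ℝ) * ((q : ℝ) + 1) := by
    have : t < t₀ * (q + 1) := by
      calc t = r + t₀ * q := h.symm
        _ < t₀ + t₀ * q := by omega
        _ = t₀ * (q + 1) := by ring
    have := (Nat.cast_lt (α := ℝ)).mpr this
    push_cast at this ⊢
    linarith
  have hdiv : (t:ℝ)/(t₀:ℝ) ≤ (q:ℝ) + 1 := by
    rw [div_le_iff₀ ht₀pos]
    nlinarith [hineq]
  have hinv : -(t₀:ℝ)⁻¹ * (t:ℝ) = -((t:ℝ)/(t₀:ℝ)) := by ring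
  rw [hinv]
  linarith

section abstract3
variable {E : Type*} [NormedAddCommGroup E] [NormedSpace ℝ E] [FiniteDimensional ℝ E]
variable (T : E →ₗ[ℝ] E)

theorem abstract_main (hfirm : ∀ x : E, ‖T x‖ ^ 2 + ‖x - T x‖ ^ 2 ≤ ‖x‖ ^ 2) (x0 : E) :
    ∃ f : E, T f = f ∧ ∃ c ρ : ℝ, 0 ≤ c ∧ 0 ≤ ρ ∧ ρ < 1 ∧
      ∀ t : ℕ, ‖(T ^ t) x0 - f‖ ≤ c * ρ ^ t := by
  obtain ⟨t₀, ht₀, hcontr⟩ := exists_t0 T hfirm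
  have htop := ker_sup_range_eq_top T hfirm
  have hx0 : x0 ∈ (LinearMap.ker (LinearMap.id - T : E →ₗ[ℝ] E))
      ⊔ (LinearMap.range (LinearMap.id - T : E →ₗ[ℝ] E)) := htop ▸ Submodule.mem_top
  obtain ⟨f, hf, u, hu, hfu⟩ := Submodule.mem_sup.mp hx0
  have hTf : T f = f := by
    have h0 := LinearMap.mem_ker.mp hf
    rw [Lap] at h0
    exact (sub_eq_zero.mp h0).symm
  -- contraction along multiples of t₀
  have hq : ∀ q : ℕ, ‖(T ^ (t₀ * q)) u‖ ≤ ((2:ℝ)⁻¹) ^ q * ‖u‖ := by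
    intro q
    induction q with
    | zero => simp
    | succ q ih =>
      have hmem : (T ^ (t₀ * q)) u ∈ LinearMap.range (LinearMap.id - T : E →ₗ[ℝ] E) :=
        Tpow_range_inv T _ u hu
      have heq : (T ^ (t₀ * (q+1))) u = (T ^ t₀) ((T ^ (t₀ * q)) u) := by
        rw [← Module.End.mul_apply, ← pow_add]
        congr 1
        ring
      rw [heq]
      calc ‖(T ^ t₀) ((T ^ (t₀ * q)) u)‖ ≤ 2⁻¹ * ‖(T ^ (t₀ * q)) u‖ := hcontr _ hmem
        _ ≤ 2⁻¹ * (((2:ℝ)⁻¹) ^ q * ‖u‖) := by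
            refine mul_le_mul_of_nonneg_left ih (by norm_num)
        _ = ((2:ℝ)⁻¹) ^ (q+1) * ‖u‖ := by ring
  refine ⟨f, hTf, 2 * ‖u‖, (2:ℝ) ^ (-(t₀:ℝ)⁻¹), by positivity,
    Real.rpow_nonneg (by norm_num) _, ?_, ?_⟩
  · apply Real.rpow_lt_one_of_one_lt_of_neg one_lt_two
    have h0 : (0:ℝ) < (t₀:ℝ) := by exact_mod_cast ht₀
    have h1 : (0:ℝ) < (t₀:ℝ)⁻¹ := by positivity
    linarith
  · intro t
    have hdecomp : t % t₀ + t₀ * (t / t₀) = t := Nat.mod_add_div t t₀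
    have hx : (T ^ t) x0 - f = (T ^ t) u := by
      rw [← hfu, map_add, Tpow_fix T f hTf]
      abel
    rw [hx]
    have h1 : ‖(T ^ t) u‖ ≤ ((2:ℝ)⁻¹) ^ (t / t₀) * ‖u‖ := by
      have heq : (T ^ t) u = (T ^ (t % t₀)) ((T ^ (t₀ * (t / t₀))) u) := by
        rw [← Module.End.mul_apply, ← pow_add]
        exact congrArg (fun e => (T ^ e) u) hdecomp.symm
      rw [heq]
      exact le_trans (Tpow_norm_le T hfirm _ _) (hq _)
    have h2 := geom_bound t₀ ht₀ t (t / t₀) (t % t₀) hdecomp (Nat.mod_lt t (by omega))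
    calc ‖(T ^ t) u‖ ≤ ((2:ℝ)⁻¹) ^ (t / t₀) * ‖u‖ := h1
      _ ≤ (2 * ((2:ℝ) ^ (-(t₀:ℝ)⁻¹)) ^ t) * ‖u‖ :=
          mul_le_mul_of_nonneg_right h2 (norm_nonneg u)
      _ = 2 * ‖u‖ * ((2:ℝ) ^ (-(t₀:ℝ)⁻¹)) ^ t := by ring

end abstract3
section concrete
open Matrix

lemma PiLp_comp_le {ι : Type*} [Fintype ι] {β : ι → Type*} [∀ i, SeminormedAddCommGroup (β i)]
    (x : PiLp 2 β) (i : ι) : ‖x i‖ ≤ ‖x‖ := by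
  refine le_of_sq_le_sq' (norm_nonneg _) ?_
  rw [PiLp.norm_sq_eq_of_L2]
  exact Finset.single_le_sum (f := fun j => ‖x j‖ ^ 2) (fun j _ => sq_nonneg _)
    (Finset.mem_univ i)

variable {m n : ℕ} [NeZero m]

noncomputable def Bop (Q : Fin m → Matrix (Fin n) (Fin n) ℝ) :
    PiLp 2 (fun _ : Fin m => EuclideanSpace ℝ (Fin n)) →ₗ[ℝ]
      PiLp 2 (fun _ : Fin m => EuclideanSpace ℝ (Fin n)) where
  toFun x := WithLp.toLp 2 (fun i => toE (Q i *ᵥ (x (i-1) : Fin n → ℝ)))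
  map_add' x y := by
    apply PiLp.ext; intro i
    show toE (Q i *ᵥ ((x + y) (i-1) : Fin n → ℝ)) = toE (Q i *ᵥ (x (i-1) : Fin n → ℝ)) + toE (Q i *ᵥ (y (i-1) : Fin n → ℝ))
    have : ((x + y) (i-1) : Fin n → ℝ) = (x (i-1) : Fin n → ℝ) + (y (i-1) : Fin n → ℝ) := rfl
    rw [this, Matrix.mulVec_add]
    rfl
  map_smul' c x := by
    apply PiLp.ext; intro i
    show toE (Q i *ᵥ ((c • x) (i-1) : Fin n → ℝ)) = c • toE (Q i *ᵥ (x (i-1) : Fin n → ℝ))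
    have : ((c • x) (i-1) : Fin n → ℝ) = c • (x (i-1) : Fin n → ℝ) := rfl
    rw [this, Matrix.mulVec_smul]
    rfl

noncomputable def Tcyc (Q : Fin m → Matrix (Fin n) (Fin n) ℝ) :
    PiLp 2 (fun _ : Fin m => EuclideanSpace ℝ (Fin n)) →ₗ[ℝ]
      PiLp 2 (fun _ : Fin m => EuclideanSpace ℝ (Fin n)) :=
  (2⁻¹ : ℝ) • (LinearMap.id + Bop Q)

lemma Top_apply (Q : Fin m → Matrix (Fin n) (Fin n) ℝ)
    (x : PiLp 2 (fun _ : Fin m => EuclideanSpace ℝ (Fin n))) :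
    Tcyc Q x = (2⁻¹ : ℝ) • (x + Bop Q x) := rfl

lemma sum_shift (g : Fin m → ℝ) : ∑ i, g (i - 1) = ∑ i, g i :=
  Fintype.sum_equiv (Equiv.subRight (1 : Fin m)) _ _ (fun i => rfl)

section hQ
variable (Q : Fin m → Matrix (Fin n) (Fin n) ℝ)
  (hQs : ∀ i, (Q i)ᵀ = Q i) (hQi : ∀ i, Q i * Q i = Q i)

include hQs hQi in
lemma Bop_norm_le (x : PiLp 2 (fun _ : Fin m => EuclideanSpace ℝ (Fin n))) :
    ‖Bop Q x‖ ≤ ‖x‖ := by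
  refine le_of_sq_le_sq' (norm_nonneg _) ?_
  rw [PiLp.norm_sq_eq_of_L2, PiLp.norm_sq_eq_of_L2]
  have h1 : ∀ i : Fin m, ‖(Bop Q x) i‖ ^ 2 ≤ ‖x (i-1)‖ ^ 2 := by
    intro i
    have h2 : ‖toE (Q i *ᵥ (x (i-1) : Fin n → ℝ))‖ ≤ ‖toE ((x (i-1) : Fin n → ℝ))‖ :=
      proj_norm_le (Q i) (hQs i) (hQi i) _
    have h3 : toE ((x (i-1) : Fin n → ℝ)) = x (i-1) := rfl
    rw [h3] at h2
    have h4 : (Bop Q x) i = toE (Q i *ᵥ (x (i-1) : Fin n → ℝ)) := rfl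
    rw [h4]
    exact pow_le_pow_left₀ (norm_nonneg _) h2 2
  calc ∑ i, ‖(Bop Q x) i‖ ^ 2 ≤ ∑ i, ‖x (i-1)‖ ^ 2 := Finset.sum_le_sum fun i _ => h1 i
    _ = ∑ i, ‖x i‖ ^ 2 := sum_shift (fun i => ‖x i‖ ^ 2)

include hQs hQi in
lemma Top_firm (x : PiLp 2 (fun _ : Fin m => EuclideanSpace ℝ (Fin n))) :
    ‖Tcyc Q x‖ ^ 2 + ‖x - Tcyc Q x‖ ^ 2 ≤ ‖x‖ ^ 2 := by
  have h1 : Tcyc Q x = (2⁻¹ : ℝ) • (x + Bop Q x) := rfl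
  have h2 : x - Tcyc Q x = (2⁻¹ : ℝ) • (x - Bop Q x) := by
    rw [h1]; module
  rw [h2, h1, norm_smul, norm_smul]
  have h3 := parallelogram_law_with_norm ℝ x (Bop Q x)
  have h4 := Bop_norm_le Q hQs hQi x
  have h5 : ‖(2⁻¹ : ℝ)‖ = 2⁻¹ := by rw [Real.norm_eq_abs]; norm_num
  rw [h5]
  nlinarith [norm_nonneg (Bop Q x), norm_nonneg x]

-- fixed points are consensus states
include hQs hQi in
open Fin.NatCast in
lemma fix_consensus (f : PiLp 2 (fun _ : Fin m => EuclideanSpace ℝ (Fin n)))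
    (hf : Tcyc Q f = f) : ∀ i, f i = f 0 := by
  have hcomp : ∀ i, (Bop Q f) i = f i := by
    intro i
    have h0 : (Tcyc Q f) i = f i := by rw [hf]
    have h1 : (2⁻¹ : ℝ) • (f i + (Bop Q f) i) = f i := h0
    have h2 : (2:ℝ) • ((2⁻¹ : ℝ) • (f i + (Bop Q f) i)) = (2:ℝ) • f i := by rw [h1]
    rw [smul_smul] at h2
    norm_num at h2
    have h3 : f i + (Bop Q f) i = f i + f i := by rw [h2, two_smul]
    exact add_left_cancel h3
  have hQf : ∀ i, toE (Q i *ᵥ (f (i-1) : Fin n → ℝ)) = f i := hcomp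
  have hle : ∀ i : Fin m, ‖f i‖ ≤ ‖f (i-1)‖ := by
    intro i
    rw [← hQf i]
    exact proj_norm_le (Q i) (hQs i) (hQi i) _
  have hsum : ∑ i, ‖f (i-1)‖ = ∑ i, ‖f i‖ := sum_shift (fun i => ‖f i‖)
  have heq : ∀ i : Fin m, ‖f (i-1)‖ = ‖f i‖ := by
    have := (Finset.sum_eq_sum_iff_of_le (fun i _ => hle i)).mp hsum.symm
    intro i
    exact (this i (Finset.mem_univ i)).symm
  have hstep : ∀ i : Fin m, f i = f (i - 1) := by
    intro i
    have h1 : Q i *ᵥ (f (i-1) : Fin n → ℝ) = (f (i-1) : Fin n → ℝ) := by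
      apply proj_norm_eq (Q i) (hQs i) (hQi i)
      rw [hQf i]
      exact (heq i).symm
    rw [← hQf i, h1]
    rfl
  -- conclude constancy around the cycle
  have key : ∀ j : ℕ, f ((j : Fin m)) = f 0 := by
    intro j
    induction j with
    | zero => rw [Nat.cast_zero]
    | succ j ih =>
      have h1 : ((j+1 : ℕ) : Fin m) = ((j : ℕ) : Fin m) + 1 := by push_cast; ring
      rw [h1]
      have h2 := hstep (((j : ℕ) : Fin m) + 1)
      rw [add_sub_cancel_right] at h2
      rw [h2, ih]
  intro i
  have : ((i.val : ℕ) : Fin m) = i := Fin.cast_val_eq_self i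
  rw [← this]
  exact key i.val

end hQ
end concrete
noncomputable def ofE {n : ℕ} (v : EuclideanSpace ℝ (Fin n)) : Fin n → ℝ :=
  WithLp.equiv 2 _ v

lemma sup_le_l2 {n : ℕ} (v : Fin n → ℝ) : ‖v‖ ≤ ‖toE v‖ := by
  rw [pi_norm_le_iff_of_nonneg (norm_nonneg (toE v))]
  intro a
  exact PiLp_comp_le (toE v) a

/-- On the directed cycle `0 → 1 → ⋯ → m-1 → 0` (`m ≥ 2`, matrix `C i` with full
row rank on the arc `(i-1, i)`, indices mod `m`), the update
`x i (t+1) = x i t − (1/2) P i (x i t − x (i-1) t)`, with `Pᵢ = Cᵢᵀ(CᵢCᵢᵀ)⁻¹Cᵢ` and initial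
states `x i 0 ∈ image (P i)`, reaches a consensus exponentially fast. -/
theorem stmt_14 (m n : ℕ) [NeZero m] (hm : 2 ≤ m) (k : Fin m → ℕ)
    (C : (i : Fin m) → Matrix (Fin (k i)) (Fin n) ℝ)
    (hrank : ∀ i, (C i).rank = k i)
    (x : ℕ → Fin m → (Fin n → ℝ))
    (hinit : ∀ i : Fin m,
      x 0 i ∈ LinearMap.range ((C i)ᵀ * (C i * (C i)ᵀ)⁻¹ * C i).mulVecLin)
    (hupd : ∀ t (i : Fin m), x (t + 1) i = x t i -
      (1 / 2 : ℝ) • ((C i)ᵀ * (C i * (C i)ᵀ)⁻¹ * C i).mulVec (x t i - x t (i - 1))) :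
    ∃ (z : Fin n → ℝ) (c ρ : ℝ), 0 ≤ c ∧ 0 ≤ ρ ∧ ρ < 1 ∧
      ∀ (i : Fin m) (t : ℕ), ‖x t i - z‖ ≤ c * ρ ^ t := by
  classical
  set Q : Fin m → Matrix (Fin n) (Fin n) ℝ :=
    fun i => (C i)ᵀ * (C i * (C i)ᵀ)⁻¹ * C i with hQdef
  have hQs : ∀ i, (Q i)ᵀ = Q i := fun i => proj_symm (C i) (hrank i)
  have hQi : ∀ i, Q i * Q i = Q i := fun i => proj_idem (C i) (hrank i)
  set X : ℕ → PiLp 2 (fun _ : Fin m => EuclideanSpace ℝ (Fin n)) :=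
    fun t => WithLp.toLp 2 (fun i => toE (x t i)) with hXdef
  -- the states remain in the ranges of the projections
  have hV : ∀ t i, Q i *ᵥ x t i = x t i := by
    intro t
    induction t with
    | zero =>
      intro i
      obtain ⟨v, hv⟩ := hinit i
      rw [Matrix.mulVecLin_apply] at hv
      rw [← hv, Matrix.mulVec_mulVec, hQi i]
    | succ t ih =>
      intro i
      have hupd2 : x (t + 1) i = x t i -
          (1 / 2 : ℝ) • (Q i *ᵥ (x t i - x t (i - 1))) := by
        simp only [hQdef]; exact hupd t i
      rw [hupd2]
      simp only [Matrix.mulVec_sub, Matrix.mulVec_smul, Matrix.mulVec_mulVec, hQi i, ih i]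
  have hupd' : ∀ t i, x (t+1) i = (2⁻¹ : ℝ) • (x t i + Q i *ᵥ (x t (i-1))) := by
    intro t i
    have hupd2 : x (t + 1) i = x t i -
        (1 / 2 : ℝ) • (Q i *ᵥ (x t i - x t (i - 1))) := by
      simp only [hQdef]; exact hupd t i
    rw [hupd2, Matrix.mulVec_sub, hV t i]
    module
  have hXt : ∀ t, X t = ((Tcyc Q) ^ t) (X 0) := by
    intro t
    induction t with
    | zero => rfl
    | succ t ih =>
      rw [Tpow_succ_apply, ← ih]
      apply PiLp.ext; intro i
      show X (t+1) i = (Tcyc Q (X t)) i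
      have hrhs : (Tcyc Q (X t)) i
          = (2⁻¹ : ℝ) • (X t i + toE (Q i *ᵥ (X t (i-1) : Fin n → ℝ))) := rfl
      rw [hrhs]
      exact congrArg toE (hupd' t i)
  have hfirm := Top_firm Q hQs hQi
  obtain ⟨f, hTf, c, ρ, hc, hρ0, hρ1, hbound⟩ := abstract_main (Tcyc Q) hfirm (X 0)
  have hcons : ∀ i, f i = f 0 := fix_consensus Q hQs hQi f hTf
  refine ⟨ofE (f 0), c, ρ, hc, hρ0, hρ1, ?_⟩
  intro i t
  have h1 : ‖X t - f‖ ≤ c * ρ ^ t := by rw [hXt t]; exact hbound t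
  have h2 : (X t - f) i = toE (x t i - ofE (f 0)) := by
    have h3 : (X t - f) i = X t i - f i := rfl
    rw [h3, hcons i]
    rfl
  calc ‖x t i - ofE (f 0)‖ ≤ ‖toE (x t i - ofE (f 0))‖ := sup_le_l2 _
    _ = ‖(X t - f) i‖ := by rw [h2]
    _ ≤ ‖X t - f‖ := PiLp_comp_le _ i
    _ ≤ c * ρ ^ t := h1
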